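/- Let X, U, Y be complex Hilbert spaces, let Σ = (A,B,C,D) be a passive system with system operator T and transfer function θ(z) = D + z·C(I − zA)⁻¹B, and let D₊ be the positive square root of I − T∘T* on X ⊕ Y. Let P_X and P_Y be the coordinate projections of X ⊕ Y onto X and Y, and define ψ(z) := P_Y∘D₊ + z·C∘(I − zA)⁻¹∘P_X∘D₊ : X ⊕ Y → Y. Then for all complex z, w with |z| < 1 and |w| < 1: I_Y − θ(z)∘θ(w)* = (1 − z·conj(w)) · (C(I − zA)⁻¹)∘((I − conj(w)·A*)⁻¹C*) + ψ(z)∘ψ(w)*. -/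

import Mathlib

/-!
STATEMENT 2: For a passive system Σ = (A,B,C,D) with system operator T and
D₊ the positive square root of I − T∘T* on X ⊕₂ Y, setting
ψ(z) := P_Y∘D₊ + z·C(I − zA)⁻¹∘P_X∘D₊, one has for |z|,|w| < 1:
I_Y − θ(z)θ(w)* = (1 − z·conj w)·(C(I−zA)⁻¹)∘((I−conj(w)A*)⁻¹C*) + ψ(z)ψ(w)*.
-/

noncomputable section

open ContinuousLinearMap

variable {X U Y : Type*}
  [NormedAddCommGroup X] [InnerProductSpace ℂ X] [CompleteSpace X]
  [NormedAddCommGroup U] [InnerProductSpace ℂ U] [CompleteSpace U]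
  [NormedAddCommGroup Y] [InnerProductSpace ℂ Y] [CompleteSpace Y]

/-- The system operator `T(x,u) = (Ax + Bu, Cx + Du)` as a block operator between the
Hilbert space direct sums `X ⊕₂ U` and `X ⊕₂ Y`. -/
def sysOp (A : X →L[ℂ] X) (B : U →L[ℂ] X) (C : X →L[ℂ] Y) (D : U →L[ℂ] Y) :
    WithLp 2 (X × U) →L[ℂ] WithLp 2 (X × Y) :=
  (((WithLp.prodContinuousLinearEquiv 2 ℂ X Y).symm : (X × Y) →L[ℂ] WithLp 2 (X × Y)).comp
      ((A.comp (fst ℂ X U) + B.comp (snd ℂ X U)).prod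
        (C.comp (fst ℂ X U) + D.comp (snd ℂ X U)))).comp
    ((WithLp.prodContinuousLinearEquiv 2 ℂ X U : WithLp 2 (X × U) →L[ℂ] (X × U)))

/-- The transfer function `θ(z) = D + z·C(I − zA)⁻¹B` of the system `(A,B,C,D)`. -/
def transferFn (A : X →L[ℂ] X) (B : U →L[ℂ] X) (C : X →L[ℂ] Y) (D : U →L[ℂ] Y) (z : ℂ) :
    U →L[ℂ] Y :=
  D + z • ((C.comp (Ring.inverse (1 - z • A))).comp B)

/-- Coordinate projection of the Hilbert direct sum `X ⊕₂ Y` onto `X`. -/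
def projX : WithLp 2 (X × Y) →L[ℂ] X :=
  (fst ℂ X Y).comp (WithLp.prodContinuousLinearEquiv 2 ℂ X Y : WithLp 2 (X × Y) →L[ℂ] (X × Y))

/-- Coordinate projection of the Hilbert direct sum `X ⊕₂ Y` onto `Y`. -/
def projY : WithLp 2 (X × Y) →L[ℂ] Y :=
  (snd ℂ X Y).comp (WithLp.prodContinuousLinearEquiv 2 ℂ X Y : WithLp 2 (X × Y) →L[ℂ] (X × Y))

/-- The function `ψ(z) = P_Y∘D₊ + z·C(I − zA)⁻¹∘P_X∘D₊`. -/
def psiFn (A : X →L[ℂ] X) (C : X →L[ℂ] Y) (Dp : WithLp 2 (X × Y) →L[ℂ] WithLp 2 (X × Y))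
    (z : ℂ) : WithLp 2 (X × Y) →L[ℂ] Y :=
  projY.comp Dp + z • ((C.comp (Ring.inverse (1 - z • A))).comp (projX.comp Dp))

def inclL : X →L[ℂ] WithLp 2 (X × Y) :=
  (((WithLp.prodContinuousLinearEquiv 2 ℂ X Y).symm : (X × Y) →L[ℂ] WithLp 2 (X × Y))).comp
    (inl ℂ X Y)
def inclR : Y →L[ℂ] WithLp 2 (X × Y) :=
  (((WithLp.prodContinuousLinearEquiv 2 ℂ X Y).symm : (X × Y) →L[ℂ] WithLp 2 (X × Y))).comp
    (inr ℂ X Y)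

lemma projX_comp_inclL : (projX).comp (inclL : X →L[ℂ] WithLp 2 (X × Y)) = ContinuousLinearMap.id ℂ X := by
  ext x; simp [projX, inclL]
lemma projX_comp_inclR : (projX).comp (inclR : Y →L[ℂ] WithLp 2 (X × Y)) = 0 := by
  ext x; simp [projX, inclR]
lemma projY_comp_inclL : (projY).comp (inclL : X →L[ℂ] WithLp 2 (X × Y)) = 0 := by
  ext x; simp [projY, inclL]
lemma projY_comp_inclR : (projY).comp (inclR : Y →L[ℂ] WithLp 2 (X × Y)) = ContinuousLinearMap.id ℂ Y := by
  ext x; simp [projY, inclR]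
lemma incl_proj_split :
    (inclL : X →L[ℂ] WithLp 2 (X × Y)).comp projX + inclR.comp projY
      = ContinuousLinearMap.id ℂ (WithLp 2 (X × Y)) := by
  ext p
  simp only [projX, projY, inclL, inclR, add_apply, coe_comp', Function.comp_apply, id_apply]
  apply (WithLp.prodContinuousLinearEquiv 2 ℂ X Y).injective
  simp [Prod.ext_iff]

lemma adjoint_projX : adjoint (projX : WithLp 2 (X × Y) →L[ℂ] X) = inclL := by
  symm; rw [eq_adjoint_iff]
  intro x p
  simp [inclL, projX, WithLp.prod_inner_apply]
lemma adjoint_projY : adjoint (projY : WithLp 2 (X × Y) →L[ℂ] Y) = inclR := by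
  symm; rw [eq_adjoint_iff]
  intro x p
  simp [inclR, projY, WithLp.prod_inner_apply]
variable (A : X →L[ℂ] X) (B : U →L[ℂ] X) (C : X →L[ℂ] Y) (D : U →L[ℂ] Y)

lemma sysOp_comp_inclL :
    (sysOp A B C D).comp (inclL : X →L[ℂ] WithLp 2 (X × U))
      = (inclL : X →L[ℂ] WithLp 2 (X × Y)).comp A + inclR.comp C := by
  ext x
  simp only [sysOp, inclL, inclR, add_apply, coe_comp', Function.comp_apply]
  apply (WithLp.prodContinuousLinearEquiv 2 ℂ X Y).injective
  simp [Prod.ext_iff]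

lemma sysOp_comp_inclR :
    (sysOp A B C D).comp (inclR : U →L[ℂ] WithLp 2 (X × U))
      = (inclL : X →L[ℂ] WithLp 2 (X × Y)).comp B + inclR.comp D := by
  ext x
  simp only [sysOp, inclL, inclR, add_apply, coe_comp', Function.comp_apply]
  apply (WithLp.prodContinuousLinearEquiv 2 ℂ X Y).injective
  simp [Prod.ext_iff]

lemma norm_inclL_apply (x : X) : ‖(inclL : X →L[ℂ] WithLp 2 (X × Y)) x‖ = ‖x‖ := by
  have h2 : ‖(inclL : X →L[ℂ] WithLp 2 (X × Y)) x‖ ^ 2 = ‖x‖ ^ 2 := by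
    rw [WithLp.prod_norm_sq_eq_of_L2]
    simp [inclL]
  calc ‖(inclL : X →L[ℂ] WithLp 2 (X × Y)) x‖
      = Real.sqrt (‖(inclL : X →L[ℂ] WithLp 2 (X × Y)) x‖ ^ 2) :=
        (Real.sqrt_sq (norm_nonneg _)).symm
    _ = Real.sqrt (‖x‖ ^ 2) := by rw [h2]
    _ = ‖x‖ := Real.sqrt_sq (norm_nonneg _)

lemma norm_projX_apply_le (p : WithLp 2 (X × Y)) : ‖(projX : WithLp 2 (X × Y) →L[ℂ] X) p‖ ≤ ‖p‖ := by
  have h2 : ‖(projX : WithLp 2 (X × Y) →L[ℂ] X) p‖ ^ 2 ≤ ‖p‖ ^ 2 := by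
    rw [WithLp.prod_norm_sq_eq_of_L2]
    have : (projX : WithLp 2 (X × Y) →L[ℂ] X) p = p.fst := rfl
    rw [this]
    nlinarith [sq_nonneg ‖p.snd‖]
  calc ‖(projX : WithLp 2 (X × Y) →L[ℂ] X) p‖
      = Real.sqrt (‖(projX : WithLp 2 (X × Y) →L[ℂ] X) p‖ ^ 2) := (Real.sqrt_sq (norm_nonneg _)).symm
    _ ≤ Real.sqrt (‖p‖ ^ 2) := Real.sqrt_le_sqrt h2
    _ = ‖p‖ := Real.sqrt_sq (norm_nonneg _)

lemma projX_sysOp_inclL :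
    (projX).comp ((sysOp A B C D).comp (inclL : X →L[ℂ] WithLp 2 (X × U))) = A := by
  rw [sysOp_comp_inclL, comp_add, ← comp_assoc, ← comp_assoc, projX_comp_inclL,
    projX_comp_inclR, id_comp, zero_comp, add_zero]

lemma norm_A_le (h : ‖sysOp A B C D‖ ≤ 1) : ‖A‖ ≤ 1 := by
  refine opNorm_le_bound _ zero_le_one fun x => ?_
  have hAx : A x = projX ((sysOp A B C D) ((inclL : X →L[ℂ] WithLp 2 (X × U)) x)) := by
    conv_lhs => rw [← projX_sysOp_inclL A B C D]
    rfl
  calc ‖A x‖ = ‖projX ((sysOp A B C D) ((inclL : X →L[ℂ] WithLp 2 (X × U)) x))‖ := by rw [hAx]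
    _ ≤ ‖(sysOp A B C D) ((inclL : X →L[ℂ] WithLp 2 (X × U)) x)‖ := norm_projX_apply_le _
    _ ≤ ‖sysOp A B C D‖ * ‖(inclL : X →L[ℂ] WithLp 2 (X × U)) x‖ := le_opNorm _ _
    _ = ‖sysOp A B C D‖ * ‖x‖ := by rw [norm_inclL_apply]
    _ ≤ 1 * ‖x‖ := by gcongr
lemma adjoint_add' {E F : Type*} [NormedAddCommGroup E] [InnerProductSpace ℂ E] [CompleteSpace E]
    [NormedAddCommGroup F] [InnerProductSpace ℂ F] [CompleteSpace F] (f g : E →L[ℂ] F) :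
    adjoint (f + g) = adjoint f + adjoint g :=
  map_add (adjoint : (E →L[ℂ] F) ≃ₗᵢ⋆[ℂ] (F →L[ℂ] E)) f g

lemma adjoint_smul' {E F : Type*} [NormedAddCommGroup E] [InnerProductSpace ℂ E] [CompleteSpace E]
    [NormedAddCommGroup F] [InnerProductSpace ℂ F] [CompleteSpace F] (c : ℂ) (f : E →L[ℂ] F) :
    adjoint (c • f) = (starRingEnd ℂ) c • adjoint f :=
  LinearIsometryEquiv.map_smulₛₗ (adjoint : (E →L[ℂ] F) ≃ₗᵢ⋆[ℂ] (F →L[ℂ] E)) c f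

lemma isUnit_one_sub_smul {z : ℂ} (hA : ‖A‖ ≤ 1) (hz : ‖z‖ < 1) : IsUnit (1 - z • A) := by
  have h : ‖z • A‖ < 1 := by
    rw [norm_smul]
    exact lt_of_le_of_lt (mul_le_of_le_one_right (norm_nonneg z) hA) hz
  exact ⟨Units.oneSub _ h, Units.val_oneSub _ _⟩

lemma inverse_eq_one_add {z : ℂ} (h : IsUnit (1 - z • A)) :
    Ring.inverse (1 - z • A) = 1 + z • (Ring.inverse (1 - z • A) * A) := by
  have h1 := Ring.inverse_mul_cancel (1 - z • A) h
  rw [mul_sub, mul_one, mul_smul_comm] at h1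
  exact sub_eq_iff_eq_add.mp h1

lemma adjoint_inverse (w : ℂ) :
    adjoint (Ring.inverse (1 - w • A))
      = Ring.inverse (1 - (starRingEnd ℂ) w • adjoint A) := by
  rw [← star_eq_adjoint, ← Ring.inverse_star]
  congr 1
  rw [star_sub, star_one, star_smul, star_eq_adjoint, starRingEnd_apply]
@[simp] lemma projX_inclL_apply (x : X) : (projX : WithLp 2 (X × Y) →L[ℂ] X) (inclL x) = x := by
  simp [projX, inclL]
@[simp] lemma projX_inclR_apply (y : Y) : (projX : WithLp 2 (X × Y) →L[ℂ] X) (inclR y) = 0 := by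
  simp [projX, inclR]
@[simp] lemma projY_inclL_apply (x : X) : (projY : WithLp 2 (X × Y) →L[ℂ] Y) (inclL x) = 0 := by
  simp [projY, inclL]
@[simp] lemma projY_inclR_apply (y : Y) : (projY : WithLp 2 (X × Y) →L[ℂ] Y) (inclR y) = y := by
  simp [projY, inclR]
lemma sysOp_inclL_apply (x : X) :
    (sysOp A B C D) ((inclL : X →L[ℂ] WithLp 2 (X × U)) x) = inclL (A x) + inclR (C x) := by
  have := ContinuousLinearMap.ext_iff.mp (sysOp_comp_inclL A B C D) x
  simpa using this
lemma sysOp_inclR_apply (u : U) :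
    (sysOp A B C D) ((inclR : U →L[ℂ] WithLp 2 (X × U)) u) = inclL (B u) + inclR (D u) := by
  have := ContinuousLinearMap.ext_iff.mp (sysOp_comp_inclR A B C D) u
  simpa using this

lemma G_eq (v : ℂ) (hu : IsUnit (1 - v • A)) :
    C.comp (Ring.inverse (1 - v • A))
      = C + v • ((C.comp (Ring.inverse (1 - v • A))).comp A) := by
  conv_lhs => rw [inverse_eq_one_add A hu]
  rw [comp_add, mul_def, comp_smul, ← comp_assoc]
  simp [one_def]

lemma F_sysOp_inclL (v : ℂ) (hu : IsUnit (1 - v • A)) :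
    (projY + v • ((C.comp (Ring.inverse (1 - v • A))).comp projX)).comp
      ((sysOp A B C D).comp (inclL : X →L[ℂ] WithLp 2 (X × U)))
      = C.comp (Ring.inverse (1 - v • A)) := by
  conv_rhs => rw [G_eq A C v hu]
  ext x
  simp [sysOp_inclL_apply, map_add]

lemma F_sysOp_inclR (v : ℂ) :
    (projY + v • ((C.comp (Ring.inverse (1 - v • A))).comp projX)).comp
      ((sysOp A B C D).comp (inclR : U →L[ℂ] WithLp 2 (X × U)))
      = transferFn A B C D v := by
  ext u
  simp [sysOp_inclR_apply, map_add, transferFn]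



set_option maxHeartbeats 2000000 in
theorem statement2 (A : X →L[ℂ] X) (B : U →L[ℂ] X) (C : X →L[ℂ] Y) (D : U →L[ℂ] Y)
    (hpass : ‖sysOp A B C D‖ ≤ 1)
    (Dp : WithLp 2 (X × Y) →L[ℂ] WithLp 2 (X × Y))
    (hDp_pos : Dp.IsPositive)
    (hDp_sq : Dp.comp Dp
      = ContinuousLinearMap.id ℂ (WithLp 2 (X × Y))
        - (sysOp A B C D).comp (ContinuousLinearMap.adjoint (sysOp A B C D)))
    (z w : ℂ) (hz : ‖z‖ < 1) (hw : ‖w‖ < 1) :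
    ContinuousLinearMap.id ℂ Y
        - (transferFn A B C D z).comp (ContinuousLinearMap.adjoint (transferFn A B C D w))
      = (1 - z * (starRingEnd ℂ) w) •
          ((C.comp (Ring.inverse (1 - z • A))).comp
            ((Ring.inverse (1 - (starRingEnd ℂ) w • ContinuousLinearMap.adjoint A)).comp
              (ContinuousLinearMap.adjoint C)))
        + (psiFn A C Dp z).comp (ContinuousLinearMap.adjoint (psiFn A C Dp w)) := by
  have hA : ‖A‖ ≤ 1 := norm_A_le A B C D hpass
  have huz : IsUnit (1 - z • A) := isUnit_one_sub_smul A hA hz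
  have huw : IsUnit (1 - w • A) := isUnit_one_sub_smul A hA hw
  have hDp_adj : adjoint Dp = Dp := hDp_pos.isSelfAdjoint.adjoint_eq
  have hadj_inclR : adjoint (inclR : U →L[ℂ] WithLp 2 (X × U)) = projY := by
    rw [← adjoint_projY, adjoint_adjoint]
  have hadj_inclL : adjoint (inclL : X →L[ℂ] WithLp 2 (X × U)) = projX := by
    rw [← adjoint_projX, adjoint_adjoint]
  have hFw_adj : (adjoint (projY + w • ((C.comp (Ring.inverse (1 - w • A))).comp projX))) = inclR + (starRingEnd ℂ) w • (inclL.comp (adjoint (C.comp (Ring.inverse (1 - w • A))))) := by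
    rw [adjoint_add', adjoint_smul', adjoint_comp, adjoint_projX, adjoint_projY]
  have hψz : psiFn A C Dp z = (projY + z • ((C.comp (Ring.inverse (1 - z • A))).comp projX)).comp Dp := by
    rw [psiFn]; simp only [add_comp, smul_comp, comp_assoc]
  have hψw : psiFn A C Dp w = (projY + w • ((C.comp (Ring.inverse (1 - w • A))).comp projX)).comp Dp := by
    rw [psiFn]; simp only [add_comp, smul_comp, comp_assoc]
  have hGw_adj : projX.comp ((adjoint (sysOp A B C D)).comp (adjoint (projY + w • ((C.comp (Ring.inverse (1 - w • A))).comp projX)))) = (adjoint (C.comp (Ring.inverse (1 - w • A)))) := by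
    conv_rhs => rw [← F_sysOp_inclL A B C D w huw]
    rw [adjoint_comp, adjoint_comp, hadj_inclL]
    simp only [comp_assoc]
  have e1 : (transferFn A B C D z).comp (adjoint (transferFn A B C D w))
      = ((projY + z • ((C.comp (Ring.inverse (1 - z • A))).comp projX)).comp (sysOp A B C D)).comp
          (((inclR.comp projY) : WithLp 2 (X × U) →L[ℂ] WithLp 2 (X × U)).comp
            ((adjoint (sysOp A B C D)).comp (adjoint (projY + w • ((C.comp (Ring.inverse (1 - w • A))).comp projX))))) := by
    rw [← F_sysOp_inclR A B C D z, ← F_sysOp_inclR A B C D w, adjoint_comp, adjoint_comp,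
      hadj_inclR]
    simp only [comp_assoc]
  have e2 : ((inclR.comp projY) : WithLp 2 (X × U) →L[ℂ] WithLp 2 (X × U))
      = ContinuousLinearMap.id ℂ (WithLp 2 (X × U)) - inclL.comp projX :=
    eq_sub_of_add_eq' incl_proj_split
  have eG : ((projY + z • ((C.comp (Ring.inverse (1 - z • A))).comp projX)).comp (sysOp A B C D)).comp
      (((inclL.comp projX) : WithLp 2 (X × U) →L[ℂ] WithLp 2 (X × U)).comp
        ((adjoint (sysOp A B C D)).comp (adjoint (projY + w • ((C.comp (Ring.inverse (1 - w • A))).comp projX))))) = (C.comp (Ring.inverse (1 - z • A))).comp (adjoint (C.comp (Ring.inverse (1 - w • A)))) := by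
    conv_rhs => rw [← F_sysOp_inclL A B C D z huz, ← hGw_adj]
    simp only [comp_assoc]
  have e3 : (transferFn A B C D z).comp (adjoint (transferFn A B C D w))
      = ((projY + z • ((C.comp (Ring.inverse (1 - z • A))).comp projX)).comp (sysOp A B C D)).comp ((adjoint (sysOp A B C D)).comp (adjoint (projY + w • ((C.comp (Ring.inverse (1 - w • A))).comp projX)))) - (C.comp (Ring.inverse (1 - z • A))).comp (adjoint (C.comp (Ring.inverse (1 - w • A)))) := by
    rw [e1, e2, sub_comp, id_comp, comp_sub, eG]
  have eFF : (projY + z • ((C.comp (Ring.inverse (1 - z • A))).comp projX)).comp (adjoint (projY + w • ((C.comp (Ring.inverse (1 - w • A))).comp projX)))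
      = ContinuousLinearMap.id ℂ Y + (z * (starRingEnd ℂ) w) • ((C.comp (Ring.inverse (1 - z • A))).comp (adjoint (C.comp (Ring.inverse (1 - w • A))))) := by
    rw [hFw_adj]
    ext y
    simp [map_add, smul_smul, mul_comm]
  have eψ : (psiFn A C Dp z).comp (adjoint (psiFn A C Dp w))
      = (projY + z • ((C.comp (Ring.inverse (1 - z • A))).comp projX)).comp (adjoint (projY + w • ((C.comp (Ring.inverse (1 - w • A))).comp projX))) - ((projY + z • ((C.comp (Ring.inverse (1 - z • A))).comp projX)).comp (sysOp A B C D)).comp ((adjoint (sysOp A B C D)).comp (adjoint (projY + w • ((C.comp (Ring.inverse (1 - w • A))).comp projX)))) := by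
    rw [hψz, hψw, adjoint_comp, hDp_adj]
    calc ((projY + z • ((C.comp (Ring.inverse (1 - z • A))).comp projX)).comp Dp).comp (Dp.comp (adjoint (projY + w • ((C.comp (Ring.inverse (1 - w • A))).comp projX))))
        = (projY + z • ((C.comp (Ring.inverse (1 - z • A))).comp projX)).comp ((Dp.comp Dp).comp (adjoint (projY + w • ((C.comp (Ring.inverse (1 - w • A))).comp projX)))) := by simp only [comp_assoc]
      _ = (projY + z • ((C.comp (Ring.inverse (1 - z • A))).comp projX)).comp ((ContinuousLinearMap.id ℂ (WithLp 2 (X × Y))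
            - (sysOp A B C D).comp (adjoint (sysOp A B C D))).comp (adjoint (projY + w • ((C.comp (Ring.inverse (1 - w • A))).comp projX)))) := by rw [hDp_sq]
      _ = (projY + z • ((C.comp (Ring.inverse (1 - z • A))).comp projX)).comp (adjoint (projY + w • ((C.comp (Ring.inverse (1 - w • A))).comp projX))) - ((projY + z • ((C.comp (Ring.inverse (1 - z • A))).comp projX)).comp (sysOp A B C D)).comp ((adjoint (sysOp A B C D)).comp (adjoint (projY + w • ((C.comp (Ring.inverse (1 - w • A))).comp projX)))) := by
          rw [sub_comp, id_comp, comp_sub]; simp only [comp_assoc]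
  have eRw : (Ring.inverse (1 - (starRingEnd ℂ) w • ContinuousLinearMap.adjoint A)).comp
      (ContinuousLinearMap.adjoint C) = (adjoint (C.comp (Ring.inverse (1 - w • A)))) := by
    rw [← adjoint_inverse A w, ← adjoint_comp]
  rw [eRw, e3, eψ, eFF, sub_smul, one_smul]
  abel

end
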